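/- If the source and target distributions satisfy the label-shift assumption P_t(z|y) = P_p(z|y), and under the pre-training distribution P_p(y|z) ∝ exp(z_y), then for a class-balanced target distribution, P_t(y|z) = softmax(z − π_p)_y, where π_p(y) = log P_p(y). -/

import Mathlib

open Finset

/-- Under label shift (`P_t(z|y) = P_p(z|y)`), a softmax zero-shot posterior
under the pre-training distribution (`P_p(y|z) ∝ exp(z_y)`), and a
class-balanced target distribution, the target posterior is
`P_t(y|z) = softmax(z − π_p)_y` with `π_p(y) = log P_p(y)`. -/
theorem target_posterior_eq_debiased_softmax
    {Z : Type*} [Fintype Z] {K : ℕ} (hK : 0 < K)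
    (score : Z → Fin K → ℝ)
    (Pp Pt : Z → Fin K → ℝ)
    (hPp : ∀ z y, 0 ≤ Pp z y) (hPt : ∀ z y, 0 ≤ Pt z y)
    (hPpsum : ∑ z, ∑ y, Pp z y = 1) (hPtsum : ∑ z, ∑ y, Pt z y = 1)
    (PpY PtY : Fin K → ℝ)
    (hPpY : ∀ y, PpY y = ∑ z, Pp z y)
    (hPtY : ∀ y, PtY y = ∑ z, Pt z y)
    (hPpYpos : ∀ y, 0 < PpY y) (hPtYpos : ∀ y, 0 < PtY y)
    (hPpZpos : ∀ z, 0 < ∑ y, Pp z y) (hPtZpos : ∀ z, 0 < ∑ y, Pt z y)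
    -- label shift: P_t(z|y) = P_p(z|y)
    (hshift : ∀ z y, Pt z y / PtY y = Pp z y / PpY y)
    -- zero-shot posterior: P_p(y|z) = softmax(score z)_y
    (hzs : ∀ z y, Pp z y / (∑ y', Pp z y') =
      Real.exp (score z y) / ∑ i, Real.exp (score z i))
    -- class-balanced target distribution
    (hbal : ∀ y, PtY y = 1 / K) :
    ∀ z y, Pt z y / (∑ y', Pt z y') =
      Real.exp (score z y - Real.log (PpY y)) /
        ∑ i, Real.exp (score z i - Real.log (PpY i)) := by
  intro z y
  haveI : Nonempty (Fin K) := ⟨⟨0, hK⟩⟩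
  set S : ℝ := ∑ y', Pp z y' with hS
  set E : ℝ := ∑ i, Real.exp (score z i) with hE
  have hSpos : 0 < S := hPpZpos z
  have hEpos : 0 < E := Finset.sum_pos (fun i _ => Real.exp_pos _) univ_nonempty
  -- express Pp z y' / PpY y' in terms of exps
  have hPp' : ∀ y', Pp z y' / PpY y' =
      (S / E) * Real.exp (score z y' - Real.log (PpY y')) := by
    intro y'
    have h := hzs z y'
    have hPpval : Pp z y' = S * Real.exp (score z y') / E := by
      rw [div_eq_div_iff hSpos.ne' hEpos.ne'] at h
      rw [eq_div_iff hEpos.ne']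
      linear_combination h
    rw [hPpval, Real.exp_sub, Real.exp_log (hPpYpos y')]
    field_simp
  -- express Pt z y'
  have hPtz : ∀ y', Pt z y' = (1 / K) * (Pp z y' / PpY y') := by
    intro y'
    have h1 : Pt z y' = PtY y' * (Pt z y' / PtY y') :=
      (mul_div_cancel₀ _ (hPtYpos y').ne').symm
    rw [h1, hshift, hbal]
  have hKne : (1 : ℝ) / K ≠ 0 := by
    have : (0:ℝ) < K := by exact_mod_cast hK
    positivity
  have hSE : S / E ≠ 0 := by positivity
  calc Pt z y / (∑ y', Pt z y')
      = ((1/K) * ((S/E) * Real.exp (score z y - Real.log (PpY y)))) /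
        ((1/K) * ((S/E) * ∑ i, Real.exp (score z i - Real.log (PpY i)))) := by
        rw [hPtz y, hPp' y]
        congr 1
        rw [Finset.sum_congr rfl (fun y' _ => by rw [hPtz y', hPp' y']),
          ← Finset.mul_sum, ← Finset.mul_sum]
    _ = Real.exp (score z y - Real.log (PpY y)) /
        ∑ i, Real.exp (score z i - Real.log (PpY i)) := by
        rw [mul_div_mul_left _ _ hKne, mul_div_mul_left _ _ hSE]
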